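/- Let B = [[b,a,c],[aᵀ,0,-aᵀ],[cᵀ,-a,-b]] ∈ Sym_{2n+r}(ℝ) with b symmetric, c skew-symmetric, a of size n×r, let W = [[0],[0],[I_n]] and J' = -[[0,0,I_n],[0,I_r,0],[I_n,0,0]]. Define Φ(s) = Wᵀ J' e^{sB} W and Γ(s) = Wᵀ e^{sB} W. Then the function Δ(s) = Φ(s)Γ(s)⁻¹ has Taylor expansion Δ(s) = -c s + (a aᵀ - bc - cb) s²/2 + O(s³) at s = 0. -/

import Mathlib

open Matrix

/-- Entrywise derivative of a matrix-valued function of a real variable. -/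
noncomputable def matDeriv {m n : Type*} (f : ℝ → Matrix m n ℝ) (s : ℝ) : Matrix m n ℝ :=
  Matrix.of fun i j => deriv (fun t => f t i j) s

attribute [local instance] Matrix.linftyOpNormedAddCommGroup Matrix.linftyOpNormedSpace
  Matrix.linftyOpNormedRing Matrix.linftyOpNormedAlgebra

section aux

variable {E F : Type*} [NormedAddCommGroup E] [NormedSpace ℝ E] [FiniteDimensional ℝ E]
  [NormedAddCommGroup F] [NormedSpace ℝ F]

private lemma lin_comp_hasDerivAt (L : E →ₗ[ℝ] F) {f : ℝ → E} {f' : E} {s : ℝ}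
    (h : HasDerivAt f f' s) : HasDerivAt (fun t => L (f t)) (L f') s :=
  (L.toContinuousLinearMap.hasFDerivAt).comp_hasDerivAt s h

/-- The entry evaluation as a linear map. -/
private def entryL {p q : Type*} (i : p) (j : q) : Matrix p q ℝ →ₗ[ℝ] ℝ :=
  { toFun := fun M => M i j, map_add' := fun _ _ => rfl, map_smul' := fun _ _ => rfl }

/-- Submatrix as a linear map. -/
private def subL {N p q : Type*} (g : p → N) (h : q → N) :
    Matrix N N ℝ →ₗ[ℝ] Matrix p q ℝ :=
  { toFun := fun M => M.submatrix g h, map_add' := fun _ _ => rfl, map_smul' := fun _ _ => rfl }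

private lemma entry_hasDerivAt {p q : Type*} [Fintype p] [Fintype q]
    {f : ℝ → Matrix p q ℝ} {f' : Matrix p q ℝ} {s : ℝ} (h : HasDerivAt f f' s) (i : p) (j : q) :
    HasDerivAt (fun t => f t i j) (f' i j) s :=
  lin_comp_hasDerivAt (entryL i j) h

private lemma matDeriv_of_hasDerivAt {p q : Type*} [Fintype p] [Fintype q]
    {f : ℝ → Matrix p q ℝ} {f' : Matrix p q ℝ} {s : ℝ} (h : HasDerivAt f f' s) :
    matDeriv f s = f' := by
  ext i j
  exact (entry_hasDerivAt h i j).deriv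

private lemma sub_hasDerivAt {N p q : Type*} [Fintype N] [Fintype p] [Fintype q]
    (g : p → N) (g' : q → N) {f : ℝ → Matrix N N ℝ} {f' : Matrix N N ℝ} {s : ℝ}
    (h : HasDerivAt f f' s) :
    HasDerivAt (fun t => (f t).submatrix g g') (f'.submatrix g g') s :=
  lin_comp_hasDerivAt (subL g g') h

end aux

/-- for `B = [[b,a,c],[aᵀ,0,-aᵀ],[cᵀ,-a,-b]]` with `b` symmetric and
`c` skew-symmetric, `W = [[0],[0],[I_n]]` and `J' = -[[0,0,I],[0,I,0],[I,0,0]]`,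
the function `Δ(s) = Φ(s)Γ(s)⁻¹`, with `Φ(s) = WᵀJ'e^{sB}W` and `Γ(s) = Wᵀe^{sB}W`,
has Taylor expansion `Δ(s) = -cs + (aaᵀ - bc - cb)s²/2 + O(s³)` at `s = 0`,
i.e. `Δ(0) = 0`, `Δ'(0) = -c`, `Δ''(0) = aaᵀ - bc - cb`. -/
theorem stmt14 (n r : ℕ)
    (b : Matrix (Fin n) (Fin n) ℝ) (a : Matrix (Fin n) (Fin r) ℝ)
    (c : Matrix (Fin n) (Fin n) ℝ) (hb : bᵀ = b) (hc : cᵀ = -c)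
    (B J' : Matrix (Fin n ⊕ (Fin r ⊕ Fin n)) (Fin n ⊕ (Fin r ⊕ Fin n)) ℝ)
    (hB : B = Matrix.fromBlocks b (Matrix.fromCols a c) (Matrix.fromRows aᵀ cᵀ)
      (Matrix.fromBlocks 0 (-aᵀ) (-a) (-b)))
    (hJ' : J' = -(Matrix.fromBlocks 0 (Matrix.fromCols 0 1) (Matrix.fromRows 0 1)
      (Matrix.fromBlocks 1 0 0 0)))
    (W : Matrix (Fin n ⊕ (Fin r ⊕ Fin n)) (Fin n) ℝ)
    (hW : W = Matrix.fromRows 0 (Matrix.fromRows 0 1))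
    (Δ : ℝ → Matrix (Fin n) (Fin n) ℝ)
    (hΔ : ∀ s, Δ s = (Wᵀ * J' * NormedSpace.exp (s • B) * W) *
      (Wᵀ * NormedSpace.exp (s • B) * W)⁻¹) :
    Δ 0 = 0 ∧ matDeriv Δ 0 = -c ∧
      matDeriv (fun s => matDeriv Δ s) 0 = a * aᵀ - b * c - c * b := by
  set ii : Fin n → Fin n ⊕ (Fin r ⊕ Fin n) := Sum.inr ∘ Sum.inr with hii
  set E : ℝ → Matrix (Fin n ⊕ (Fin r ⊕ Fin n)) (Fin n ⊕ (Fin r ⊕ Fin n)) ℝ :=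
    fun s => NormedSpace.exp (s • B) with hE
  -- abstract corner extraction lemmas
  have hWt : ∀ M : Matrix (Fin n ⊕ (Fin r ⊕ Fin n)) (Fin n ⊕ (Fin r ⊕ Fin n)) ℝ,
      Wᵀ * M * W = M.submatrix ii ii := by
    intro M; subst hW; ext i j
    simp [hii, Matrix.mul_apply, Fintype.sum_sum_type, Matrix.one_apply]
  have hWJ : ∀ M : Matrix (Fin n ⊕ (Fin r ⊕ Fin n)) (Fin n ⊕ (Fin r ⊕ Fin n)) ℝ,
      Wᵀ * J' * M * W = -(M.submatrix Sum.inl ii) := by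
    intro M; subst hW hJ'; ext i j
    simp [hii, Matrix.mul_apply, Fintype.sum_sum_type, Matrix.one_apply]
  -- the basic functions
  set Γ : ℝ → Matrix (Fin n) (Fin n) ℝ := fun s => (E s).submatrix ii ii with hΓ
  set Φ : ℝ → Matrix (Fin n) (Fin n) ℝ := fun s => -((E s).submatrix Sum.inl ii) with hΦ
  set G : ℝ → Matrix (Fin n) (Fin n) ℝ := fun s => Ring.inverse (Γ s) with hG
  set Γ' : ℝ → Matrix (Fin n) (Fin n) ℝ := fun s => (B * E s).submatrix ii ii with hΓ'
  set Φ' : ℝ → Matrix (Fin n) (Fin n) ℝ := fun s => -((B * E s).submatrix Sum.inl ii) with hΦ'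
  -- Δ equals Φ * G everywhere
  have hΔF : Δ = fun s => Φ s * G s := by
    funext s
    rw [hΔ s, hWJ, hWt, Matrix.nonsing_inv_eq_ringInverse]
  -- derivatives of E, Γ, Φ
  have hEd : ∀ s, HasDerivAt E (B * E s) s := fun s => hasDerivAt_exp_smul_const' B s
  have hEd2 : ∀ s, HasDerivAt (fun t => B * E t) (B * (B * E s)) s :=
    fun s => (hEd s).const_mul B
  have hΓd : ∀ s, HasDerivAt Γ (Γ' s) s := fun s => sub_hasDerivAt ii ii (hEd s)
  have hΦd : ∀ s, HasDerivAt Φ (Φ' s) s := fun s => (sub_hasDerivAt Sum.inl ii (hEd s)).neg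
  have hΓ'd : ∀ s, HasDerivAt Γ' ((B * (B * E s)).submatrix ii ii) s :=
    fun s => sub_hasDerivAt ii ii (hEd2 s)
  have hΦ'd : ∀ s, HasDerivAt Φ' (-((B * (B * E s)).submatrix Sum.inl ii)) s :=
    fun s => (sub_hasDerivAt Sum.inl ii (hEd2 s)).neg
  -- values at 0
  have hE0 : E 0 = 1 := by simp [hE]
  have hΓ0 : Γ 0 = 1 := by
    rw [hΓ]; simp only [hE0]; ext i j
    simp [hii, Matrix.one_apply, Sum.inr.injEq]
  have hΦ0 : Φ 0 = 0 := by
    rw [hΦ]; simp only [hE0]; ext i j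
    simp [hii, Matrix.one_apply]
  have hG0 : G 0 = 1 := by rw [hG]; simp only [hΓ0, Ring.inverse_one]
  -- block values of B
  have hB33 : B.submatrix ii ii = -b := by subst hB; ext i j; simp [hii]
  have hB13 : B.submatrix Sum.inl ii = c := by subst hB; ext i j; simp [hii]
  have hBB13 : (B * B).submatrix Sum.inl ii = b * c - a * aᵀ - c * b := by
    subst hB; ext i j
    simp [hii, Matrix.mul_apply, Fintype.sum_sum_type, Finset.sum_sub_distrib]
    ring
  -- derivative of G at unit points
  have hGd : ∀ s, IsUnit (Γ s) → HasDerivAt G (-(G s * Γ' s * G s)) s := by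
    intro s hs
    obtain ⟨u, hu⟩ := hs
    have h1 : HasDerivAt (Ring.inverse ∘ Γ)
        ((-ContinuousLinearMap.mulLeftRight ℝ _ ↑u⁻¹ ↑u⁻¹) (Γ' s)) s := by
      refine HasFDerivAt.comp_hasDerivAt s ?_ (hΓd s)
      rw [← hu]
      exact hasFDerivAt_ringInverse u
    have h2 : ((-ContinuousLinearMap.mulLeftRight ℝ _ (↑u⁻¹) ↑u⁻¹) (Γ' s))
        = -(G s * Γ' s * G s) := by
      have huG : (↑u⁻¹ : Matrix (Fin n) (Fin n) ℝ) = G s := by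
        show _ = Ring.inverse (Γ s)
        rw [← hu, Ring.inverse_unit]
      simp [huG]
    rw [← h2]
    exact h1
  -- units near 0
  have hunit : ∀ᶠ s in nhds (0 : ℝ), IsUnit (Γ s) := by
    have hcont : ContinuousAt Γ 0 := (hΓd 0).continuousAt
    have : {M : Matrix (Fin n) (Fin n) ℝ | IsUnit M} ∈ nhds (Γ 0) := by
      rw [hΓ0]
      exact Units.isOpen.mem_nhds isUnit_one
    exact hcont.preimage_mem_nhds this
  have hΓ0unit : IsUnit (Γ 0) := by rw [hΓ0]; exact isUnit_one
  -- first derivative of Δ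
  have hΔd : ∀ s, IsUnit (Γ s) →
      HasDerivAt Δ (Φ' s * G s + Φ s * -(G s * Γ' s * G s)) s := by
    intro s hs
    rw [hΔF]
    exact (hΦd s).mul (hGd s hs)
  -- part 1
  refine ⟨?_, ?_, ?_⟩
  · rw [hΔF]
    simp only [hΦ0, hG0, zero_mul]
  -- part 2
  · rw [matDeriv_of_hasDerivAt (hΔd 0 hΓ0unit)]
    simp only [hΦ', hE0, mul_one, hB13, hΦ0, hG0, zero_mul, mul_zero, add_zero, neg_zero]
  -- part 3
  · -- matDeriv Δ agrees with the explicit derivative formula near 0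
    set D : ℝ → Matrix (Fin n) (Fin n) ℝ :=
      fun s => Φ' s * G s + Φ s * -(G s * Γ' s * G s) with hD
    have hev : ∀ᶠ s in nhds (0 : ℝ), matDeriv Δ s = D s := by
      filter_upwards [hunit] with s hs
      exact matDeriv_of_hasDerivAt (hΔd s hs)
    -- derivative of D at 0
    have hGd0 : HasDerivAt G (-(G 0 * Γ' 0 * G 0)) 0 := hGd 0 hΓ0unit
    have h1 : HasDerivAt (fun s => Φ' s * G s)
        (-((B * (B * E 0)).submatrix Sum.inl ii) * G 0 + Φ' 0 * -(G 0 * Γ' 0 * G 0)) 0 :=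
      (hΦ'd 0).mul hGd0
    have h3 : HasDerivAt (fun s => G s * Γ' s * G s)
        ((-(G 0 * Γ' 0 * G 0) * Γ' 0 + G 0 * (B * (B * E 0)).submatrix ii ii) * G 0
          + G 0 * Γ' 0 * -(G 0 * Γ' 0 * G 0)) 0 :=
      ((hGd0.mul (hΓ'd 0)).mul hGd0)
    have h2 : HasDerivAt (fun s => Φ s * -(G s * Γ' s * G s))
        (Φ' 0 * -(G 0 * Γ' 0 * G 0)
          + Φ 0 * -((-(G 0 * Γ' 0 * G 0) * Γ' 0 + G 0 * (B * (B * E 0)).submatrix ii ii) * G 0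
          + G 0 * Γ' 0 * -(G 0 * Γ' 0 * G 0))) 0 :=
      (hΦd 0).mul h3.neg
    have hDd : HasDerivAt D
        (-((B * (B * E 0)).submatrix Sum.inl ii) * G 0 + Φ' 0 * -(G 0 * Γ' 0 * G 0)
          + (Φ' 0 * -(G 0 * Γ' 0 * G 0)
          + Φ 0 * -((-(G 0 * Γ' 0 * G 0) * Γ' 0 + G 0 * (B * (B * E 0)).submatrix ii ii) * G 0
          + G 0 * Γ' 0 * -(G 0 * Γ' 0 * G 0)))) 0 := h1.add h2
    -- transfer via the eventual equality, entrywise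
    have : matDeriv (fun s => matDeriv Δ s) 0 = matDeriv D 0 := by
      ext i j
      exact Filter.EventuallyEq.deriv_eq (by filter_upwards [hev] with s hs; rw [hs])
    rw [this, matDeriv_of_hasDerivAt hDd]
    -- now a pure matrix algebra computation
    have hΓ'0 : Γ' 0 = -b := by rw [hΓ']; simp only [hE0, mul_one, hB33]
    have hΦ'0 : Φ' 0 = -c := by rw [hΦ']; simp only [hE0, mul_one, hB13]
    rw [hΦ'0, hΓ'0, hΦ0, hG0, hE0]
    simp only [mul_one, one_mul]
    rw [hBB13]
    noncomm_ring
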